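/- Let A₁, A₂ be Hermitian dA×dA complex matrices with no common eigenvector (no nonzero α ∈ ℂ^{dA} is simultaneously an eigenvector of A₁ and of A₂), and let B₁, B₂ be Hermitian dB×dB complex matrices with no common eigenvector. Then for all real k₁, k₂ with k₁·k₂ ≠ 0, setting K = k₁·(A₁ ⊗ B₁) + k₂·(A₂ ⊗ B₂), either every eigenvector of K corresponding to the minimum eigenvalue λ_min(K) is entangled, or every eigenvector of K corresponding to the maximum eigenvalue λ_max(K) is entangled. -/

import Mathlib

open Matrix
open scoped Kronecker

/-- The Kronecker (tensor) product of two vectors: `(α ⊗ β)(i,j) = α i * β j`. -/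
def vecKron {dA dB : ℕ} (α : Fin dA → ℂ) (β : Fin dB → ℂ) : Fin dA × Fin dB → ℂ :=
  fun p => α p.1 * β p.2

/-- The minimum (real) eigenvalue of a matrix: the infimum of the set of real numbers `μ`
admitting a nonzero eigenvector with eigenvalue `μ`.  For a Hermitian matrix this is the
least eigenvalue. -/
noncomputable def minEig {n : Type*} [Fintype n] (K : Matrix n n ℂ) : ℝ :=
  sInf {μ : ℝ | ∃ v : n → ℂ, v ≠ 0 ∧ K.mulVec v = (μ : ℂ) • v}

/-- The maximum (real) eigenvalue of a matrix. -/
noncomputable def maxEig {n : Type*} [Fintype n] (K : Matrix n n ℂ) : ℝ :=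
  sSup {μ : ℝ | ∃ v : n → ℂ, v ≠ 0 ∧ K.mulVec v = (μ : ℂ) • v}

lemma two_indep {n : Type*} {x y : n → ℂ} {i i' : n}
    (hD : x i * y i' - x i' * y i ≠ 0) {P Q : ℂ}
    (h : ∀ i, P * x i + Q * y i = 0) : P = 0 ∧ Q = 0 := by
  constructor
  · have h1 : P * (x i * y i' - x i' * y i) = 0 := by
      linear_combination y i' * h i - y i * h i'
    exact (mul_eq_zero.1 h1).resolve_right hD
  · have h1 : Q * (x i * y i' - x i' * y i) = 0 := by
      linear_combination x i * h i' - x i' * h i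
    exact (mul_eq_zero.1 h1).resolve_right hD

lemma dep_smul {n : Type*} {x y : n → ℂ} {i₀ : n} (hi₀ : x i₀ ≠ 0)
    (h : ∀ i i', x i * y i' = x i' * y i) : y = (y i₀ / x i₀) • x := by
  funext i
  rw [Pi.smul_apply, smul_eq_mul, div_mul_eq_mul_div, eq_div_iff hi₀]
  linear_combination h i₀ i

lemma kron_mulVec {dA dB : ℕ} (A : Matrix (Fin dA) (Fin dA) ℂ) (B : Matrix (Fin dB) (Fin dB) ℂ)
    (α : Fin dA → ℂ) (β : Fin dB → ℂ) :
    (A ⊗ₖ B).mulVec (vecKron α β) = vecKron (A.mulVec α) (B.mulVec β) := by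
  funext p
  obtain ⟨i, j⟩ := p
  simp only [Matrix.mulVec, dotProduct, vecKron, Fintype.sum_prod_type, kroneckerMap_apply]
  rw [Finset.sum_mul_sum]
  exact Finset.sum_congr rfl fun x _ => Finset.sum_congr rfl fun y _ => by ring

/-- Abstract key lemma.  If `k₁ u₁ⁱ w₁ʲ + k₂ u₂ⁱ w₂ʲ = lam αⁱ βʲ` for all `i, j`, with
`α, β` nonzero, `k₁ k₂ ≠ 0`, and neither `(u₁, u₂)` both multiples of `α` nor
`(w₁, w₂)` both multiples of `β`, then `lam = 0`. -/
lemma eig_zero_abstract {dA dB : ℕ}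
    {α u₁ u₂ : Fin dA → ℂ} {β w₁ w₂ : Fin dB → ℂ}
    (hA : ¬ ((∃ a₁ : ℂ, u₁ = a₁ • α) ∧ (∃ a₂ : ℂ, u₂ = a₂ • α)))
    (hB : ¬ ((∃ b₁ : ℂ, w₁ = b₁ • β) ∧ (∃ b₂ : ℂ, w₂ = b₂ • β)))
    {k₁ k₂ : ℂ} (hk₁ : k₁ ≠ 0) (hk₂ : k₂ ≠ 0)
    {i₀ : Fin dA} {j₀ : Fin dB} (hα : α i₀ ≠ 0) (hβ : β j₀ ≠ 0) {lam : ℂ}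
    (hE : ∀ i j, k₁ * (u₁ i * w₁ j) + k₂ * (u₂ i * w₂ j) = lam * (α i * β j)) :
    lam = 0 := by
  by_cases hd₁ : ∀ i i', α i * u₁ i' = α i' * u₁ i
  · have he₁ : u₁ = (u₁ i₀ / α i₀) • α := dep_smul hα hd₁
    by_cases hd₂ : ∀ i i', α i * u₂ i' = α i' * u₂ i
    · exact absurd ⟨⟨_, he₁⟩, ⟨_, dep_smul hα hd₂⟩⟩ hA
    · -- Case 2 : u₁ = e • α, while α and u₂ are independent
      push_neg at hd₂
      obtain ⟨i, i', hD⟩ := hd₂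
      have hD : α i * u₂ i' - α i' * u₂ i ≠ 0 := sub_ne_zero.2 hD
      obtain ⟨e, he₁⟩ : ∃ e : ℂ, u₁ = e • α := ⟨_, he₁⟩
      have key : ∀ j, (k₁ * e * w₁ j - lam * β j = 0) ∧ k₂ * w₂ j = 0 := by
        intro j
        refine two_indep hD (P := k₁ * e * w₁ j - lam * β j) (Q := k₂ * w₂ j) fun i => ?_
        have h := hE i j
        have hui : u₁ i = e * α i := by rw [he₁]; simp
        linear_combination h - (k₁ * w₁ j) * hui
      by_cases he0 : e = 0
      · have h1 := (key j₀).1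
        rw [he0, mul_zero, zero_mul, zero_sub, neg_eq_zero] at h1
        exact (mul_eq_zero.1 h1).resolve_right hβ
      · refine absurd ⟨⟨lam / (k₁ * e), funext fun j => ?_⟩,
          ⟨0, funext fun j => ?_⟩⟩ hB
        · rw [Pi.smul_apply, smul_eq_mul, div_mul_eq_mul_div, eq_div_iff (mul_ne_zero hk₁ he0)]
          linear_combination (key j).1
        · simpa [hk₂] using (key j).2
  · push_neg at hd₁
    obtain ⟨i₁, i₂, hD₁⟩ := hd₁
    have hD₁ : α i₁ * u₁ i₂ - α i₂ * u₁ i₁ ≠ 0 := sub_ne_zero.2 hD₁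
    by_cases hd₂ : ∀ i i', α i * u₂ i' = α i' * u₂ i
    · -- Case 3 : u₂ = f • α, while α and u₁ are independent
      obtain ⟨f, he₂⟩ : ∃ f : ℂ, u₂ = f • α := ⟨_, dep_smul hα hd₂⟩
      have key : ∀ j, (k₂ * f * w₂ j - lam * β j = 0) ∧ k₁ * w₁ j = 0 := by
        intro j
        refine two_indep hD₁ (P := k₂ * f * w₂ j - lam * β j) (Q := k₁ * w₁ j) fun i => ?_
        have h := hE i j
        have hui : u₂ i = f * α i := by rw [he₂]; simp
        linear_combination h - (k₂ * w₂ j) * hui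
      by_cases hf0 : f = 0
      · have h1 := (key j₀).1
        rw [hf0, mul_zero, zero_mul, zero_sub, neg_eq_zero] at h1
        exact (mul_eq_zero.1 h1).resolve_right hβ
      · refine absurd ⟨⟨0, funext fun j => ?_⟩,
          ⟨lam / (k₂ * f), funext fun j => ?_⟩⟩ hB
        · simpa [hk₁] using (key j).2
        · rw [Pi.smul_apply, smul_eq_mul, div_mul_eq_mul_div, eq_div_iff (mul_ne_zero hk₂ hf0)]
          linear_combination (key j).1
    · -- Case 4 : α,u₁ independent and α,u₂ independent
      push_neg at hd₂
      obtain ⟨i₃, i₄, hD₂⟩ := hd₂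
      have hD₂ : α i₃ * u₂ i₄ - α i₄ * u₂ i₃ ≠ 0 := sub_ne_zero.2 hD₂
      have r : ∀ j i, (-(lam * β j)) * α i + (k₁ * w₁ j) * u₁ i + (k₂ * w₂ j) * u₂ i = 0 := by
        intro j i
        linear_combination hE i j
      by_cases hb0 : ∀ j, w₁ j = 0
      · refine absurd ⟨⟨0, funext fun j => by simp [hb0 j]⟩,
          ⟨0, funext fun j => ?_⟩⟩ hB
        have h2 := (two_indep hD₂ (P := -(lam * β j)) (Q := k₂ * w₂ j) fun i => by
          linear_combination r j i - (u₁ i * k₁) * hb0 j).2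
        simpa [hk₂] using h2
      · push_neg at hb0
        obtain ⟨jb, hjb⟩ := hb0
        have hba : ∀ j, (k₁ * w₁ jb) * (lam * β j) = (k₁ * w₁ j) * (lam * β jb) := by
          intro j
          have h := (two_indep hD₂
            (P := (k₁ * w₁ jb) * (-(lam * β j)) - (k₁ * w₁ j) * (-(lam * β jb)))
            (Q := (k₁ * w₁ jb) * (k₂ * w₂ j) - (k₁ * w₁ j) * (k₂ * w₂ jb)) fun i => by
              linear_combination (k₁ * w₁ jb) * r j i - (k₁ * w₁ j) * r jb i).1
          linear_combination -h
        have hcb : ∀ j, (k₂ * w₂ jb) * (k₁ * w₁ j) = (k₂ * w₂ j) * (k₁ * w₁ jb) := by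
          intro j
          have h := (two_indep hD₁
            (P := (k₂ * w₂ jb) * (-(lam * β j)) - (k₂ * w₂ j) * (-(lam * β jb)))
            (Q := (k₂ * w₂ jb) * (k₁ * w₁ j) - (k₂ * w₂ j) * (k₁ * w₁ jb)) fun i => by
              linear_combination (k₂ * w₂ jb) * r j i - (k₂ * w₂ j) * r jb i).2
          linear_combination h
        by_cases hlb : lam * β jb = 0
        · have h1 := hba j₀
          rw [hlb, mul_zero] at h1
          have h2 : lam * β j₀ = 0 :=
            (mul_eq_zero.1 h1).resolve_left (mul_ne_zero hk₁ hjb)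
          exact (mul_eq_zero.1 h2).resolve_right hβ
        · have hlam : lam ≠ 0 := fun h => hlb (by rw [h, zero_mul])
          have hβjb : β jb ≠ 0 := fun h => hlb (by rw [h, mul_zero])
          have hv1 : ∀ j, w₁ j * β jb = w₁ jb * β j := by
            intro j
            have h3 : (k₁ * lam) * (w₁ j * β jb - w₁ jb * β j) = 0 := by
              linear_combination -(hba j)
            exact sub_eq_zero.1 ((mul_eq_zero.1 h3).resolve_left
              (mul_ne_zero hk₁ hlam))
          have hv2 : ∀ j, w₂ j * β jb = w₂ jb * β j := by
            intro j
            have h3 : (k₁ * k₂) * (w₂ j * w₁ jb - w₂ jb * w₁ j) = 0 := by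
              linear_combination -(hcb j)
            have h4 := sub_eq_zero.1 ((mul_eq_zero.1 h3).resolve_left
              (mul_ne_zero hk₁ hk₂))
            have h5 : (w₂ j * β jb) * w₁ jb = (w₂ jb * β j) * w₁ jb := by
              linear_combination β jb * h4 + w₂ jb * hv1 j
            exact mul_right_cancel₀ hjb h5
          exact absurd ⟨⟨w₁ jb / β jb, funext fun j => by
              rw [Pi.smul_apply, smul_eq_mul, div_mul_eq_mul_div, eq_div_iff hβjb]
              linear_combination hv1 j⟩,
            ⟨w₂ jb / β jb, funext fun j => by
              rw [Pi.smul_apply, smul_eq_mul, div_mul_eq_mul_div, eq_div_iff hβjb]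
              linear_combination hv2 j⟩⟩ hB

lemma kron_isHermitian {dA dB : ℕ} {A : Matrix (Fin dA) (Fin dA) ℂ}
    {B : Matrix (Fin dB) (Fin dB) ℂ} (hA : A.IsHermitian) (hB : B.IsHermitian) :
    (A ⊗ₖ B).IsHermitian := by
  refine Matrix.IsHermitian.ext fun p q => ?_
  obtain ⟨i, j⟩ := p
  obtain ⟨i', j'⟩ := q
  simp only [kroneckerMap_apply, star_mul', hA.apply, hB.apply]

lemma K_isHermitian {dA dB : ℕ} {A₁ A₂ : Matrix (Fin dA) (Fin dA) ℂ}
    {B₁ B₂ : Matrix (Fin dB) (Fin dB) ℂ}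
    (hA₁ : A₁.IsHermitian) (hA₂ : A₂.IsHermitian)
    (hB₁ : B₁.IsHermitian) (hB₂ : B₂.IsHermitian) (k₁ k₂ : ℝ) :
    ((k₁ : ℂ) • (A₁ ⊗ₖ B₁) + (k₂ : ℂ) • (A₂ ⊗ₖ B₂)).IsHermitian := by
  have h1 := kron_isHermitian hA₁ hB₁
  have h2 := kron_isHermitian hA₂ hB₂
  unfold Matrix.IsHermitian at *
  simp [conjTranspose_add, conjTranspose_smul, h1, h2, Complex.conj_ofReal]

lemma eig_bound {n : Type*} [Fintype n] (K : Matrix n n ℂ) {μ : ℝ} {v : n → ℂ}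
    (hv : v ≠ 0) (he : K.mulVec v = (μ : ℂ) • v) :
    |μ| ≤ ∑ p : n, ∑ q : n, ‖K p q‖ := by
  obtain ⟨p1, hp1⟩ : ∃ p, v p ≠ 0 := by
    by_contra hc; push_neg at hc; exact hv (funext hc)
  obtain ⟨p₀, -, hp₀⟩ := Finset.exists_max_image Finset.univ
    (fun p => ‖v p‖) ⟨p1, Finset.mem_univ _⟩
  have hvp₀ : 0 < ‖v p₀‖ :=
    lt_of_lt_of_le (norm_pos_iff.mpr hp1) (hp₀ p1 (Finset.mem_univ _))
  have h1 : ∑ q, K p₀ q * v q = (μ : ℂ) * v p₀ := by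
    simpa [Matrix.mulVec, dotProduct] using congrFun he p₀
  have chain : |μ| * ‖v p₀‖ ≤
      (∑ p : n, ∑ q : n, ‖K p q‖) * ‖v p₀‖ := by
    calc |μ| * ‖v p₀‖ = ‖(μ : ℂ) * v p₀‖ := by
          rw [norm_mul, Complex.norm_real, Real.norm_eq_abs]
      _ = ‖∑ q, K p₀ q * v q‖ := by rw [h1]
      _ ≤ ∑ q, ‖K p₀ q * v q‖ := norm_sum_le _ _
      _ ≤ ∑ q, ‖K p₀ q‖ * ‖v p₀‖ := by
          refine Finset.sum_le_sum fun q _ => ?_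
          rw [norm_mul]
          exact mul_le_mul_of_nonneg_left (hp₀ q (Finset.mem_univ _)) (norm_nonneg _)
      _ = (∑ q, ‖K p₀ q‖) * ‖v p₀‖ := (Finset.sum_mul _ _ _).symm
      _ ≤ (∑ p : n, ∑ q : n, ‖K p q‖) * ‖v p₀‖ := by
          refine mul_le_mul_of_nonneg_right ?_ hvp₀.le
          exact Finset.single_le_sum (f := fun p => ∑ q, ‖K p q‖)
            (fun p _ => Finset.sum_nonneg fun q _ => norm_nonneg _)
            (Finset.mem_univ p₀)
  exact le_of_mul_le_mul_right chain hvp₀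

lemma hermitian_exists_eigvec {d : ℕ} (hd : 0 < d) {A : Matrix (Fin d) (Fin d) ℂ}
    (hA : A.IsHermitian) : ∃ α : Fin d → ℂ, α ≠ 0 ∧ ∃ t : ℂ, A.mulVec α = t • α := by
  have i0 : Fin d := ⟨0, hd⟩
  refine ⟨(hA.eigenvectorBasis i0).ofLp, ?_, (hA.eigenvalues i0 : ℂ), ?_⟩
  · have h := hA.eigenvectorBasis.orthonormal.ne_zero i0
    intro hc
    exact h (by ext i; simpa using congrFun hc i)
  · have h := hA.mulVec_eigenvectorBasis i0
    rw [h]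
    funext p
    simp [Pi.smul_apply, Complex.real_smul]

lemma K_zero_false {dA dB : ℕ} (hdA : 0 < dA) (hdB : 0 < dB)
    {A₁ A₂ : Matrix (Fin dA) (Fin dA) ℂ} {B₁ B₂ : Matrix (Fin dB) (Fin dB) ℂ}
    (hA₂ : A₂.IsHermitian) (hB₂ : B₂.IsHermitian)
    (hA : ¬ ∃ α : Fin dA → ℂ, α ≠ 0 ∧ (∃ a₁ : ℂ, A₁.mulVec α = a₁ • α) ∧
        (∃ a₂ : ℂ, A₂.mulVec α = a₂ • α))
    (hB : ¬ ∃ β : Fin dB → ℂ, β ≠ 0 ∧ (∃ b₁ : ℂ, B₁.mulVec β = b₁ • β) ∧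
        (∃ b₂ : ℂ, B₂.mulVec β = b₂ • β))
    {k₁ k₂ : ℂ} (hk₁ : k₁ ≠ 0) (hk₂ : k₂ ≠ 0)
    (hK : k₁ • (A₁ ⊗ₖ B₁) + k₂ • (A₂ ⊗ₖ B₂) = 0) : False := by
  obtain ⟨α, hα0, lamA, hαeig⟩ := hermitian_exists_eigvec hdA hA₂
  obtain ⟨β, hβ0, lamB, hβeig⟩ := hermitian_exists_eigvec hdB hB₂
  have h := congrArg (fun M => Matrix.mulVec M (vecKron α β)) hK
  simp only [Matrix.add_mulVec, Matrix.smul_mulVec, kron_mulVec,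
    Matrix.zero_mulVec] at h
  have hpt : ∀ i j, k₁ * ((A₁.mulVec α) i * (B₁.mulVec β) j)
      + k₂ * ((A₂.mulVec α) i * (B₂.mulVec β) j) = 0 := by
    intro i j
    have := congrFun h (i, j)
    simpa [vecKron, Pi.add_apply, Pi.smul_apply, smul_eq_mul] using this
  obtain ⟨iₓ, hiₓ⟩ : ∃ i, α i ≠ 0 := by
    by_contra hc; push_neg at hc; exact hα0 (funext hc)
  have hnd : ¬ ∀ i i', α i * (A₁.mulVec α) i' = α i' * (A₁.mulVec α) i := by
    intro hd
    exact hA ⟨α, hα0, ⟨_, dep_smul hiₓ hd⟩, ⟨lamA, hαeig⟩⟩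
  push_neg at hnd
  obtain ⟨i, i', hD⟩ := hnd
  have hD : α i * (A₁.mulVec α) i' - α i' * (A₁.mulVec α) i ≠ 0 := sub_ne_zero.2 hD
  have hw1 : ∀ j, (B₁.mulVec β) j = 0 := by
    intro j
    have h2 := (two_indep hD (P := k₂ * lamA * lamB * β j) (Q := k₁ * (B₁.mulVec β) j)
      fun ii => by
        have h3 := hpt ii j
        have h4 : (A₂.mulVec α) ii = lamA * α ii := by rw [hαeig]; simp
        have h5 : (B₂.mulVec β) j = lamB * β j := by rw [hβeig]; simp
        linear_combination h3 - (k₂ * (B₂.mulVec β) j) * h4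
          - (k₂ * lamA * α ii) * h5).2
    rcases mul_eq_zero.1 h2 with h | h
    · exact absurd h hk₁
    · exact h
  exact hB ⟨β, hβ0, ⟨0, funext fun j => by simp [hw1 j]⟩, ⟨lamB, hβeig⟩⟩

/-- If the Hermitian pairs `A₁, A₂` and `B₁, B₂` each have no common
eigenvector, then for all nonzero reals `k₁, k₂`, setting
`K = k₁ A₁⊗B₁ + k₂ A₂⊗B₂`, either every eigenvector of `K` for the least eigenvalue is
entangled, or every eigenvector of `K` for the greatest eigenvalue is entangled. -/
theorem stmt5 {dA dB : ℕ}
    (A₁ A₂ : Matrix (Fin dA) (Fin dA) ℂ) (B₁ B₂ : Matrix (Fin dB) (Fin dB) ℂ)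
    (hA₁ : A₁.IsHermitian) (hA₂ : A₂.IsHermitian)
    (hB₁ : B₁.IsHermitian) (hB₂ : B₂.IsHermitian)
    (hA : ¬ ∃ α : Fin dA → ℂ, α ≠ 0 ∧ (∃ a₁ : ℂ, A₁.mulVec α = a₁ • α) ∧
        (∃ a₂ : ℂ, A₂.mulVec α = a₂ • α))
    (hB : ¬ ∃ β : Fin dB → ℂ, β ≠ 0 ∧ (∃ b₁ : ℂ, B₁.mulVec β = b₁ • β) ∧
        (∃ b₂ : ℂ, B₂.mulVec β = b₂ • β))
    (k₁ k₂ : ℝ) (hk : k₁ * k₂ ≠ 0) :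
    (∀ v : Fin dA × Fin dB → ℂ, v ≠ 0 →
      ((k₁ : ℂ) • (A₁ ⊗ₖ B₁) + (k₂ : ℂ) • (A₂ ⊗ₖ B₂)).mulVec v
        = (↑(minEig ((k₁ : ℂ) • (A₁ ⊗ₖ B₁) + (k₂ : ℂ) • (A₂ ⊗ₖ B₂))) : ℂ) • v →
      ¬ ∃ (α : Fin dA → ℂ) (β : Fin dB → ℂ), v = vecKron α β) ∨
    (∀ v : Fin dA × Fin dB → ℂ, v ≠ 0 →
      ((k₁ : ℂ) • (A₁ ⊗ₖ B₁) + (k₂ : ℂ) • (A₂ ⊗ₖ B₂)).mulVec v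
        = (↑(maxEig ((k₁ : ℂ) • (A₁ ⊗ₖ B₁) + (k₂ : ℂ) • (A₂ ⊗ₖ B₂))) : ℂ) • v →
      ¬ ∃ (α : Fin dA → ℂ) (β : Fin dB → ℂ), v = vecKron α β) := by
  rcases Nat.eq_zero_or_pos dA with hdA | hdA
  · subst hdA
    left
    intro v hv _
    exact absurd (funext fun p => p.1.elim0) hv
  rcases Nat.eq_zero_or_pos dB with hdB | hdB
  · subst hdB
    left
    intro v hv _
    exact absurd (funext fun p => p.2.elim0) hv
  have hk₁ : (k₁ : ℂ) ≠ 0 := Complex.ofReal_ne_zero.2 (left_ne_zero_of_mul hk)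
  have hk₂ : (k₂ : ℂ) ≠ 0 := Complex.ofReal_ne_zero.2 (right_ne_zero_of_mul hk)
  set K := (k₁ : ℂ) • (A₁ ⊗ₖ B₁) + (k₂ : ℂ) • (A₂ ⊗ₖ B₂) with hKdef
  have hmulK : ∀ (γ : Fin dA → ℂ) (δ : Fin dB → ℂ),
      K.mulVec (vecKron γ δ) = (k₁ : ℂ) • vecKron (A₁.mulVec γ) (B₁.mulVec δ)
        + (k₂ : ℂ) • vecKron (A₂.mulVec γ) (B₂.mulVec δ) := by
    intro γ δ
    rw [hKdef, Matrix.add_mulVec, Matrix.smul_mulVec, Matrix.smul_mulVec,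
      kron_mulVec, kron_mulVec]
  have key : ∀ (lam : ℝ) (w : Fin dA × Fin dB → ℂ), w ≠ 0 →
      K.mulVec w = ((lam : ℝ) : ℂ) • w →
      ∀ (α : Fin dA → ℂ) (β : Fin dB → ℂ), w = vecKron α β → lam = 0 := by
    intro lam w hw heig α β hwk
    subst hwk
    obtain ⟨p, hp⟩ : ∃ p, vecKron α β p ≠ 0 := by
      by_contra hc; push_neg at hc; exact hw (funext hc)
    have hα : α p.1 ≠ 0 := fun h => hp (by simp [vecKron, h])
    have hβ : β p.2 ≠ 0 := fun h => hp (by simp [vecKron, h])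
    rw [hmulK] at heig
    have hE : ∀ i j, (k₁ : ℂ) * ((A₁.mulVec α) i * (B₁.mulVec β) j)
        + (k₂ : ℂ) * ((A₂.mulVec α) i * (B₂.mulVec β) j) = ((lam : ℝ) : ℂ) * (α i * β j) := by
      intro i j
      have h := congrFun heig (i, j)
      simpa [vecKron, Pi.add_apply, Pi.smul_apply, smul_eq_mul] using h
    have hz := eig_zero_abstract
      (hA := fun ⟨ha1, ha2⟩ => hA ⟨α, fun h0 => hα (by rw [h0]; rfl), ha1, ha2⟩)
      (hB := fun ⟨hb1, hb2⟩ => hB ⟨β, fun h0 => hβ (by rw [h0]; rfl), hb1, hb2⟩)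
      hk₁ hk₂ hα hβ hE
    exact_mod_cast hz
  by_contra hcon
  push_neg at hcon
  obtain ⟨h₁, h₂⟩ := hcon
  obtain ⟨v, hv0, hveig, αm, βm, hvk⟩ := h₁
  obtain ⟨v', hv0', hveig', αM, βM, hvk'⟩ := h₂
  have hmin : minEig K = 0 := key _ v hv0 hveig αm βm hvk
  have hmax : maxEig K = 0 := key _ v' hv0' hveig' αM βM hvk'
  have hKH : K.IsHermitian := K_isHermitian hA₁ hA₂ hB₁ hB₂ k₁ k₂
  by_cases hK0 : K = 0
  · exact K_zero_false hdA hdB hA₂ hB₂ hA hB hk₁ hk₂ (hKdef ▸ hK0)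
  · obtain ⟨w, t, ht0, hw0, hwe⟩ := hKH.exists_eigenvector_of_ne_zero hK0
    have hwe' : K.mulVec w = ((t : ℝ) : ℂ) • w := by
      rw [hwe]; funext p; simp [Pi.smul_apply, Complex.real_smul]
    have htS : t ∈ {μ : ℝ | ∃ u : Fin dA × Fin dB → ℂ, u ≠ 0 ∧ K.mulVec u = (μ : ℂ) • u} :=
      ⟨w, hw0, hwe'⟩
    have hbb : BddBelow {μ : ℝ | ∃ u : Fin dA × Fin dB → ℂ, u ≠ 0 ∧ K.mulVec u = (μ : ℂ) • u} :=
      ⟨-(∑ p, ∑ q, ‖K p q‖), fun μ hμ => by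
        obtain ⟨u, hu, hue⟩ := hμ
        exact (abs_le.1 (eig_bound K hu hue)).1⟩
    have hba : BddAbove {μ : ℝ | ∃ u : Fin dA × Fin dB → ℂ, u ≠ 0 ∧ K.mulVec u = (μ : ℂ) • u} :=
      ⟨∑ p, ∑ q, ‖K p q‖, fun μ hμ => by
        obtain ⟨u, hu, hue⟩ := hμ
        exact (abs_le.1 (eig_bound K hu hue)).2⟩
    have h1 : minEig K ≤ t := csInf_le hbb htS
    have h2 : t ≤ maxEig K := le_csSup hba htS
    rw [hmin] at h1
    rw [hmax] at h2
    exact ht0 (le_antisymm h2 h1)
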